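/- Let d, r be integers with 0 < r < d, set n = d + r, and let A = (x_1,…,x_n) ∈ Γ_n^d with x_1 ≤ x_2 ≤ … ≤ x_n. (1) If i is such that x_i < x_{i+1} ≤ r, let A' = (x_1,…,x_{i−1}, x_i+1, x_{i+1},…,x_n); if per(A) ≤ per(A') then per(A') ≤ per_i^+(A'). (2) Symmetrically, if i is such that 2 ≤ x_{i−1} < x_i, let A'' = (x_1,…,x_{i−1}, x_i−1, x_{i+1},…,x_n); if per(A) ≤ per(A'') then per(A'') ≤ per_i^−(A''). -/

import Mathlib

/-- The permanent of an `n × n` matrix: `per(A) = ∑_{σ ∈ S_n} ∏_i A i (σ i)`. -/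
def permanent {n : ℕ}  (A : Matrix (Fin n) (Fin n) ℕ) : ℕ :=
  ∑ σ : Equiv.Perm (Fin n), ∏ i, A i (σ i)

/-- The `(0,1)`-matrix determined by the configuration `x` (1-indexed starting columns):
entry `(i,j)` (with `j : Fin n` representing column `j+1`) is `1` iff
`x i ≤ j+1 ≤ x i + d - 1`. -/
def confMatrix (n d : ℕ) (x : Fin n → ℕ) : Matrix (Fin n) (Fin n) ℕ :=
  fun i j => if x i ≤ (j : ℕ) + 1 ∧ (j : ℕ) + 1 ≤ x i + d - 1 then 1 else 0

/-- A valid configuration for `Γ_n^d`: `1 ≤ x i ≤ n - d + 1` for all `i`. -/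
def ValidConf (n d : ℕ) (x : Fin n → ℕ) : Prop :=
  ∀ i, 1 ≤ x i ∧ x i ≤ n - d + 1

/-- Membership in `Γ_n^d`: the set of `n × n` `(0,1)`-matrices each of whose rows has
exactly `d` ones forming a contiguous block. -/
def IsGamma (n d : ℕ) (A : Matrix (Fin n) (Fin n) ℕ) : Prop :=
  ∃ x : Fin n → ℕ, ValidConf n d x ∧ A = confMatrix n d x

/-- `i^* = max { k : x k = x i }`. -/
def istar {n : ℕ} (x : Fin n → ℕ) (i : Fin n) : Fin n :=
  (Finset.univ.filter fun k => x k = x i).max' ⟨i, by simp⟩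

/-- `i_* = min { k : x k = x i }`. -/
def isubstar {n : ℕ} (x : Fin n → ℕ) (i : Fin n) : Fin n :=
  (Finset.univ.filter fun k => x k = x i).min' ⟨i, by simp⟩

/-- `per_i^+`: the permanent of the configuration obtained by moving the non-zero block of
row `i^*` one step to the right. -/
def perPlus (n d : ℕ) (x : Fin n → ℕ) (i : Fin n) : ℕ :=
  permanent (confMatrix n d (Function.update x (istar x i) (x (istar x i) + 1)))

/-- `per_i^-`: the permanent of the configuration obtained by moving the non-zero block of
row `i_*` one step to the left. -/
def perMinus (n d : ℕ) (x : Fin n → ℕ) (i : Fin n) : ℕ :=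
  permanent (confMatrix n d (Function.update x (isubstar x i) (x (isubstar x i) - 1)))




def GoodSet (n d : ℕ) (y : Fin n → ℕ) : Finset (Equiv.Perm (Fin n)) :=
  Finset.univ.filter fun σ => ∀ k, y k ≤ (σ k : ℕ) + 1 ∧ (σ k : ℕ) + 1 ≤ y k + d - 1

def Mset (n d : ℕ) (y : Fin n → ℕ) (m : Fin n) (c : ℕ) : Finset (Equiv.Perm (Fin n)) :=
  Finset.univ.filter fun σ => (σ m : ℕ) + 1 = c ∧
    ∀ k, k ≠ m → y k ≤ (σ k : ℕ) + 1 ∧ (σ k : ℕ) + 1 ≤ y k + d - 1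

lemma perm_count (n d : ℕ) (y : Fin n → ℕ) :
    permanent (confMatrix n d y) = (GoodSet n d y).card := by
  unfold permanent confMatrix GoodSet
  simp only [Finset.prod_boole, Finset.mem_univ, true_implies]
  rw [Finset.sum_boole]
  simp

lemma Mset_update (n d : ℕ) (y : Fin n → ℕ) (m : Fin n) (s c : ℕ) :
    Mset n d (Function.update y m s) m c = Mset n d y m c := by
  unfold Mset
  apply Finset.filter_congr
  intro σ _
  constructor <;> (rintro ⟨h1, h2⟩; refine ⟨h1, fun k hk => ?_⟩) <;>
    [ (have := h2 k hk; rwa [Function.update_of_ne hk] at this);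
      (have := h2 k hk; rwa [Function.update_of_ne hk]) ]

lemma good_decomp (n d : ℕ) (hd : 1 ≤ d) (y : Fin n → ℕ) (m : Fin n) :
    (GoodSet n d y).card = ∑ c ∈ Finset.Icc (y m) (y m + d - 1), (Mset n d y m c).card := by
  rw [Finset.card_eq_sum_card_fiberwise (f := fun σ => (σ m : ℕ) + 1)
      (t := Finset.Icc (y m) (y m + d - 1))]
  · apply Finset.sum_congr rfl
    intro c hc
    congr 1
    rw [Finset.mem_Icc] at hc
    unfold GoodSet Mset
    rw [Finset.filter_filter]
    apply Finset.filter_congr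
    intro σ _
    constructor
    · rintro ⟨h1, h2⟩; exact ⟨h2, fun k _ => h1 k⟩
    · rintro ⟨h1, h2⟩
      refine ⟨fun k => ?_, h1⟩
      by_cases hk : k = m
      · subst hk; rw [h1]; exact hc
      · exact h2 k hk
  · intro σ hσ
    rw [GoodSet, Finset.mem_coe, Finset.mem_filter] at hσ
    rw [Finset.mem_coe, Finset.mem_Icc]
    exact hσ.2 m


lemma sum_Icc_bot {a b : ℕ} (h : a ≤ b) (F : ℕ → ℕ) :
    ∑ c ∈ Finset.Icc a b, F c = F a + ∑ c ∈ Finset.Icc (a + 1) b, F c := by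
  have he : Finset.Icc a b = insert a (Finset.Icc (a + 1) b) := by
    ext z; simp only [Finset.mem_Icc, Finset.mem_insert]; omega
  rw [he, Finset.sum_insert (by simp only [Finset.mem_Icc]; omega)]

lemma sum_Icc_top {a b : ℕ} (ha : 1 ≤ a) (h : a ≤ b) (F : ℕ → ℕ) :
    ∑ c ∈ Finset.Icc a b, F c = (∑ c ∈ Finset.Icc a (b - 1), F c) + F b := by
  rcases Nat.eq_or_lt_of_le h with rfl | hlt
  · rw [Finset.Icc_self, Finset.sum_singleton, Finset.Icc_eq_empty (by omega)]
    simp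
  · have he : Finset.Icc a b = insert b (Finset.Icc a (b - 1)) := by
      ext z; simp only [Finset.mem_Icc, Finset.mem_insert]; omega
    rw [he, Finset.sum_insert (by simp only [Finset.mem_Icc]; omega), Nat.add_comm]

lemma slide (n d : ℕ) (hd : 1 ≤ d) (y : Fin n → ℕ) (m : Fin n) (s : ℕ) (hs : 1 ≤ s) :
    (GoodSet n d (Function.update y m s)).card + (Mset n d y m (s + d)).card
      = (GoodSet n d (Function.update y m (s + 1))).card + (Mset n d y m s).card := by
  rw [good_decomp n d hd (Function.update y m s) m,
      good_decomp n d hd (Function.update y m (s + 1)) m]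
  simp only [Function.update_self]
  have h1 : ∀ c, (Mset n d (Function.update y m s) m c).card = (Mset n d y m c).card := by
    intro c; rw [Mset_update]
  have h2 : ∀ c, (Mset n d (Function.update y m (s + 1)) m c).card = (Mset n d y m c).card := by
    intro c; rw [Mset_update]
  simp only [h1, h2]
  have e1 : s + 1 + d - 1 = s + d := by omega
  rw [e1]
  have e2 : ∑ c ∈ Finset.Icc s (s + d), (Mset n d y m c).card
      = (∑ c ∈ Finset.Icc s (s + d - 1), (Mset n d y m c).card) + (Mset n d y m (s + d)).card := by
    have := sum_Icc_top (a := s) (b := s + d) hs (by omega) (fun c => (Mset n d y m c).card)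
    simpa using this
  have e3 : ∑ c ∈ Finset.Icc s (s + d), (Mset n d y m c).card
      = (Mset n d y m s).card + ∑ c ∈ Finset.Icc (s + 1) (s + d), (Mset n d y m c).card := by
    exact sum_Icc_bot (by omega) _
  omega



lemma Mdec (d r : ℕ) (hr : 0 < r) (hrd : r < d) (y : Fin (d + r) → ℕ)
    (hyv : ∀ k, 1 ≤ y k ∧ y k ≤ r + 1) (m : Fin (d + r)) (c : ℕ)
    (hc1 : 1 ≤ c) (hcr : c + 1 ≤ r) :
    (Mset (d + r) d y m (c + 1)).card ≤ (Mset (d + r) d y m c).card := by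
  have hcn : c < d + r := by omega
  have hcn' : c - 1 < d + r := by omega
  set cF : Fin (d + r) := ⟨c - 1, hcn'⟩ with hcF
  set c1F : Fin (d + r) := ⟨c, hcn⟩ with hc1F
  apply Finset.card_le_card_of_injOn (fun σ => Equiv.swap cF c1F * σ)
  · intro σ hσ
    simp only [Mset, Finset.mem_coe, Finset.mem_filter, Finset.mem_univ, true_and] at hσ ⊢
    obtain ⟨hm, hk⟩ := hσ
    have hσm : σ m = c1F := by
      apply Fin.ext; simp only [hc1F]; omega
    constructor
    · rw [Equiv.Perm.mul_apply, hσm, Equiv.swap_apply_right]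
      simp only [hcF]; omega
    · intro k hkm
      have h := hk k hkm
      rw [Equiv.Perm.mul_apply]
      rcases eq_or_ne (σ k) cF with h1 | h1
      · rw [h1, Equiv.swap_apply_left]
        have hyk := hyv k
        rw [h1] at h
        simp only [hcF] at h
        simp only [hc1F]
        omega
      · have h2 : σ k ≠ c1F := by
          intro he; exact hkm (σ.injective (he.trans hσm.symm))
        rw [Equiv.swap_apply_of_ne_of_ne h1 h2]
        exact h
  · intro σ1 _ σ2 _ h
    exact mul_left_cancel h

lemma Minc (d r : ℕ) (hr : 0 < r) (hrd : r < d) (y : Fin (d + r) → ℕ)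
    (hyv : ∀ k, 1 ≤ y k ∧ y k ≤ r + 1) (m : Fin (d + r)) (c : ℕ)
    (hc1 : d + 1 ≤ c) (hcr : c + 1 ≤ d + r) :
    (Mset (d + r) d y m c).card ≤ (Mset (d + r) d y m (c + 1)).card := by
  have hcn : c < d + r := by omega
  have hcn' : c - 1 < d + r := by omega
  set cF : Fin (d + r) := ⟨c - 1, hcn'⟩ with hcF
  set c1F : Fin (d + r) := ⟨c, hcn⟩ with hc1F
  apply Finset.card_le_card_of_injOn (fun σ => Equiv.swap cF c1F * σ)
  · intro σ hσ
    simp only [Mset, Finset.mem_coe, Finset.mem_filter, Finset.mem_univ, true_and] at hσ ⊢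
    obtain ⟨hm, hk⟩ := hσ
    have hσm : σ m = cF := by
      apply Fin.ext; simp only [hcF]; omega
    constructor
    · rw [Equiv.Perm.mul_apply, hσm, Equiv.swap_apply_left]
    · intro k hkm
      have h := hk k hkm
      rw [Equiv.Perm.mul_apply]
      rcases eq_or_ne (σ k) c1F with h1 | h1
      · rw [h1, Equiv.swap_apply_right]
        have hyk := hyv k
        rw [h1] at h
        simp only [hc1F] at h
        simp only [hcF]
        omega
      · have h2 : σ k ≠ cF := by
          intro he; exact hkm (σ.injective (he.trans hσm.symm))
        rw [Equiv.swap_apply_of_ne_of_ne h2 h1]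
        exact h
  · intro σ1 _ σ2 _ h
    exact mul_left_cancel h



lemma GoodSet_comp (n d : ℕ) (z : Fin n → ℕ) (e : Equiv.Perm (Fin n)) :
    (GoodSet n d (z ∘ e)).card = (GoodSet n d z).card := by
  apply Finset.card_bij' (fun σ _ => σ * e⁻¹) (fun σ _ => σ * e)
  · intro σ hσ
    simp only [GoodSet, Finset.mem_filter, Finset.mem_univ, true_and, Function.comp_apply] at hσ ⊢
    intro k
    have := hσ (e⁻¹ k)
    simpa using this
  · intro σ hσ
    simp only [GoodSet, Finset.mem_filter, Finset.mem_univ, true_and, Function.comp_apply] at hσ ⊢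
    intro k
    have := hσ (e k)
    simpa using this
  · intro σ _; simp [mul_assoc]
  · intro σ _; simp [mul_assoc]

lemma core_right (d r : ℕ) (hr : 0 < r) (hrd : r < d) (y : Fin (d + r) → ℕ)
    (hyv : ∀ k, 1 ≤ y k ∧ y k ≤ r + 1) (m : Fin (d + r)) (t : ℕ)
    (ht1 : 1 ≤ t) (htr : t + 1 ≤ r) (hym : y m = t + 1)
    (h : (GoodSet (d + r) d (Function.update y m t)).card ≤ (GoodSet (d + r) d y).card) :
    (GoodSet (d + r) d y).card ≤ (GoodSet (d + r) d (Function.update y m (t + 2))).card := by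
  have hy : Function.update y m (t + 1) = y := by rw [← hym]; exact Function.update_eq_self m y
  have s1 := slide (d + r) d (by omega) y m t ht1
  have s2 := slide (d + r) d (by omega) y m (t + 1) (by omega)
  rw [hy] at s1 s2
  have e2 : t + 1 + 1 = t + 2 := by omega
  have e3 : t + 1 + d = t + d + 1 := by omega
  rw [e2, e3] at s2
  have m1 := Mdec d r hr hrd y hyv m t ht1 htr
  have m2 := Minc d r hr hrd y hyv m (t + d) (by omega) (by omega)
  omega

lemma core_left (d r : ℕ) (hr : 0 < r) (hrd : r < d) (y : Fin (d + r) → ℕ)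
    (hyv : ∀ k, 1 ≤ y k ∧ y k ≤ r + 1) (m : Fin (d + r)) (s : ℕ)
    (hs2 : 2 ≤ s) (hsr : s ≤ r) (hym : y m = s)
    (h : (GoodSet (d + r) d (Function.update y m (s + 1))).card ≤ (GoodSet (d + r) d y).card) :
    (GoodSet (d + r) d y).card ≤ (GoodSet (d + r) d (Function.update y m (s - 1))).card := by
  have hy : Function.update y m s = y := by rw [← hym]; exact Function.update_eq_self m y
  have s1 := slide (d + r) d (by omega) y m (s - 1) (by omega)
  have e1 : s - 1 + 1 = s := by omega
  have e1' : s - 1 + d = s + d - 1 := by omega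
  rw [e1, e1', hy] at s1
  have s2 := slide (d + r) d (by omega) y m s (by omega)
  rw [hy] at s2
  have m1 := Mdec d r hr hrd y hyv m (s - 1) (by omega) (by omega)
  rw [e1] at m1
  have m2 := Minc d r hr hrd y hyv m (s + d - 1) (by omega) (by omega)
  have e2 : s + d - 1 + 1 = s + d := by omega
  rw [e2] at m2
  omega

/-- Pushing all the way.  Let `A = (x₁,…,x_n) ∈ Γ_n^d`, `n = d + r`, `0 < r < d`,
with `x₁ ≤ … ≤ x_n`.
(1) If `x i < x_{i+1} ≤ r` (here `j` is the index with `(j:ℕ) = (i:ℕ)+1`), let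
`A' = (x₁,…,x_{i-1}, x_i+1, x_{i+1},…,x_n)`; if `per(A) ≤ per(A')` then
`per(A') ≤ per_i^+(A')`.
(2) Symmetrically, if `2 ≤ x_{i-1} < x i` (here `j` is the index with `(i:ℕ) = (j:ℕ)+1`),
let `A'' = (x₁,…,x_{i-1}, x_i-1, x_{i+1},…,x_n)`; if `per(A) ≤ per(A'')` then
`per(A'') ≤ per_i^-(A'')`. -/
theorem push_all_the_way (d r : ℕ) (hr : 0 < r) (hrd : r < d)
    (x : Fin (d + r) → ℕ) (hx : ValidConf (d + r) d x) (hmono : Monotone x) :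
    (∀ i j : Fin (d + r), (j : ℕ) = (i : ℕ) + 1 → x i < x j → x j ≤ r →
      permanent (confMatrix (d + r) d x) ≤
        permanent (confMatrix (d + r) d (Function.update x i (x i + 1))) →
      permanent (confMatrix (d + r) d (Function.update x i (x i + 1))) ≤
        perPlus (d + r) d (Function.update x i (x i + 1)) i) ∧
    (∀ i j : Fin (d + r), (i : ℕ) = (j : ℕ) + 1 → 2 ≤ x j → x j < x i →
      permanent (confMatrix (d + r) d x) ≤
        permanent (confMatrix (d + r) d (Function.update x i (x i - 1))) →
      permanent (confMatrix (d + r) d (Function.update x i (x i - 1))) ≤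
        perMinus (d + r) d (Function.update x i (x i - 1)) i) := by
  have hxr : ∀ k, 1 ≤ x k ∧ x k ≤ r + 1 := by
    intro k; have := hx k; omega
  constructor
  · -- Part (1)
    intro i j hj hlt hjr hAB
    set t := x i with ht
    set y : Fin (d + r) → ℕ := Function.update x i (t + 1) with hy
    set m : Fin (d + r) := istar y i with hm
    have hyi : y i = t + 1 := by rw [hy]; simp
    have hym : y m = t + 1 := by
      have hmem := Finset.max'_mem (Finset.univ.filter fun k => y k = y i)
        ⟨i, by simp⟩
      rw [Finset.mem_filter] at hmem
      rw [hm, istar]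
      rw [hmem.2, hyi]
    have htr : t + 1 ≤ r := by omega
    have hyv : ∀ k, 1 ≤ y k ∧ y k ≤ r + 1 := by
      intro k
      by_cases hk : k = i
      · subst hk; rw [hyi]; omega
      · rw [hy, Function.update_of_ne hk]; exact hxr k
    have hup : Function.update y m t = x ∘ (Equiv.swap i m) := by
      funext k
      by_cases hk : k = m
      · subst hk
        rw [Function.update_self, Function.comp_apply, Equiv.swap_apply_right]
      · rw [Function.update_of_ne hk, Function.comp_apply]
        by_cases hk2 : k = i
        · subst hk2
          have him : k ≠ m := hk
          rw [Equiv.swap_apply_left, hyi]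
          have : y m = x m := by
            rw [hy, Function.update_of_ne (Ne.symm him)]
          rw [← this, hym]
        · rw [Equiv.swap_apply_of_ne_of_ne hk2 hk, hy, Function.update_of_ne hk2]
    have hhyp : (GoodSet (d + r) d (Function.update y m t)).card ≤
        (GoodSet (d + r) d y).card := by
      rw [hup, GoodSet_comp]
      rw [perm_count, perm_count] at hAB
      exact hAB
    have hcore := core_right d r hr hrd y hyv m t (by have := hxr i; omega) htr hym hhyp
    rw [perPlus, perm_count, perm_count, ← hm, hym]
    have : t + 1 + 1 = t + 2 := by omega
    rw [this]
    exact hcore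
  · -- Part (2)
    intro i j hij h2 hlt hAB
    set s := x i - 1 with hs
    set y : Fin (d + r) → ℕ := Function.update x i (x i - 1) with hy
    set m : Fin (d + r) := isubstar y i with hm
    have hs2 : 2 ≤ s := by omega
    have hsr : s ≤ r := by have := hxr i; omega
    have hyi : y i = s := by rw [hy]; simp [hs]
    have hym : y m = s := by
      have hmem := Finset.min'_mem (Finset.univ.filter fun k => y k = y i)
        ⟨i, by simp⟩
      rw [Finset.mem_filter] at hmem
      rw [hm, isubstar]
      rw [hmem.2, hyi]
    have hyv : ∀ k, 1 ≤ y k ∧ y k ≤ r + 1 := by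
      intro k
      by_cases hk : k = i
      · subst hk; rw [hyi]; omega
      · rw [hy, Function.update_of_ne hk]; exact hxr k
    have hup : Function.update y m (s + 1) = x ∘ (Equiv.swap i m) := by
      funext k
      by_cases hk : k = m
      · subst hk
        rw [Function.update_self, Function.comp_apply, Equiv.swap_apply_right]
        omega
      · rw [Function.update_of_ne hk, Function.comp_apply]
        by_cases hk2 : k = i
        · subst hk2
          have him : k ≠ m := hk
          rw [Equiv.swap_apply_left, hyi]
          have : y m = x m := by
            rw [hy, Function.update_of_ne (Ne.symm him)]
          rw [← this, hym]
        · rw [Equiv.swap_apply_of_ne_of_ne hk2 hk, hy, Function.update_of_ne hk2]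
    have hhyp : (GoodSet (d + r) d (Function.update y m (s + 1))).card ≤
        (GoodSet (d + r) d y).card := by
      rw [hup, GoodSet_comp]
      rw [perm_count, perm_count] at hAB
      exact hAB
    have hcore := core_left d r hr hrd y hyv m s hs2 hsr hym hhyp
    rw [perMinus, perm_count, perm_count, ← hm, hym]
    exact hcore
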